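/- Fix n ∈ ℕ, continuous coefficient functions c : Fin n → Fin n → (Fin n → ℝ) → ℝ, b : Fin n → (Fin n → ℝ) → ℝ and q : (Fin n → ℝ) → ℝ, and define for twice continuously differentiable u : (Fin n → ℝ) → ℂ the second-order operator E u (x) = ∑_{i,j} c i j x • ∂ᵢ∂ⱼu(x) + ∑_i b i x • ∂ᵢu(x) + q x • u(x), where ∂ᵢu(x) := fderiv ℝ u x (Pi.single i 1). Let S : (Fin n → ℝ) → ℝ and A : (Fin n → ℝ) → ℂ be C² (ContDiff ℝ 2), let x₀ : Fin n → ℝ, and for λ > 0 set u_λ(x) := Complex.exp (Complex.I * S x / λ) * A x. Then, as λ tends to 0 from the right, (λ : ℂ)² * Complex.exp (−Complex.I * S x₀ / λ) * (E u_λ)(x₀) tends to −(∑_{i,j} c i j x₀ * ∂ᵢS(x₀) * ∂ⱼS(x₀)) * A x₀. -/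

import Mathlib

open Filter

/-- The second-order linear differential operator
`E u (x) = ∑ᵢⱼ c i j x • ∂ᵢ∂ⱼ u (x) + ∑ᵢ b i x • ∂ᵢ u (x) + q x • u (x)`,
where `∂ᵢ u (x) := fderiv ℝ u x (Pi.single i 1)`. -/
noncomputable def secondOrderOp {n : ℕ}
    (c : Fin n → Fin n → (Fin n → ℝ) → ℝ)
    (b : Fin n → (Fin n → ℝ) → ℝ)
    (q : (Fin n → ℝ) → ℝ)
    (u : (Fin n → ℝ) → ℂ) (x : Fin n → ℝ) : ℂ :=
  (∑ i, ∑ j, c i j x •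
      fderiv ℝ (fun y => fderiv ℝ u y (Pi.single j 1)) x (Pi.single i 1))
    + (∑ i, b i x • fderiv ℝ u x (Pi.single i 1))
    + q x • u x

section WKBaux
variable {n : ℕ}

lemma wkb_exp_hasFDerivAt (μ : ℂ) {S : (Fin n → ℝ) → ℝ} (hS : Differentiable ℝ S)
    (x : Fin n → ℝ) :
    HasFDerivAt (fun y => Complex.exp (μ * S y))
      (Complex.exp (μ * S x) • (μ • (Complex.ofRealCLM.comp (fderiv ℝ S x)))) x := by
  have hSx : HasFDerivAt (fun y => ((S y : ℝ) : ℂ)) (Complex.ofRealCLM.comp (fderiv ℝ S x)) x :=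
    Complex.ofRealCLM.hasFDerivAt.comp x (hS x).hasFDerivAt
  exact (hSx.const_mul μ).cexp

lemma wkb_deriv1 (μ : ℂ) {S : (Fin n → ℝ) → ℝ} {A : (Fin n → ℝ) → ℂ}
    (hS : Differentiable ℝ S) (hA : Differentiable ℝ A)
    (x : Fin n → ℝ) (v : Fin n → ℝ) :
    fderiv ℝ (fun y => Complex.exp (μ * S y) * A y) x v =
      Complex.exp (μ * S x) * (fderiv ℝ A x v + μ * A x * (fderiv ℝ S x v : ℂ)) := by
  have h : fderiv ℝ (fun y => Complex.exp (μ * S y) * A y) x = _ :=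
    ((wkb_exp_hasFDerivAt μ hS x).mul (hA x).hasFDerivAt).fderiv
  rw [h]
  simp [ContinuousLinearMap.add_apply, ContinuousLinearMap.smul_apply,
    ContinuousLinearMap.comp_apply, Complex.ofRealCLM_apply, smul_eq_mul]
  ring

lemma wkb_deriv2 (μ : ℂ) {S : (Fin n → ℝ) → ℝ} {A : (Fin n → ℝ) → ℂ}
    (hS : ContDiff ℝ 2 S) (hA : ContDiff ℝ 2 A)
    (x₀ : Fin n → ℝ) (v w : Fin n → ℝ) :
    fderiv ℝ (fun y => Complex.exp (μ * S y) *
        (fderiv ℝ A y w + μ * A y * (fderiv ℝ S y w : ℂ))) x₀ v =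
      Complex.exp (μ * S x₀) *
        (fderiv ℝ (fun y => fderiv ℝ A y w) x₀ v
          + μ * (fderiv ℝ A x₀ v * (fderiv ℝ S x₀ w : ℂ))
          + μ * (A x₀ * (fderiv ℝ (fun y => fderiv ℝ S y w) x₀ v : ℂ))
          + μ * ((fderiv ℝ S x₀ v : ℂ) * fderiv ℝ A x₀ w)
          + μ ^ 2 * (A x₀ * (fderiv ℝ S x₀ v : ℂ) * (fderiv ℝ S x₀ w : ℂ))) := by
  have hSd : Differentiable ℝ S := hS.differentiable two_ne_zero
  have hAd : Differentiable ℝ A := hA.differentiable two_ne_zero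
  have hA1 : Differentiable ℝ (fun y => fderiv ℝ A y w) :=
    ((hA.fderiv_right (m := 1) (le_refl 2)).differentiable one_ne_zero).clm_apply (differentiable_const w)
  have hS1 : Differentiable ℝ (fun y => fderiv ℝ S y w) :=
    ((hS.fderiv_right (m := 1) (le_refl 2)).differentiable one_ne_zero).clm_apply (differentiable_const w)
  have hfA : HasFDerivAt (fun y => fderiv ℝ A y w)
      (fderiv ℝ (fun y => fderiv ℝ A y w) x₀) x₀ := (hA1 x₀).hasFDerivAt
  have hfS : HasFDerivAt (fun y => fderiv ℝ S y w)
      (fderiv ℝ (fun y => fderiv ℝ S y w) x₀) x₀ := (hS1 x₀).hasFDerivAt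
  have hfSc : HasFDerivAt (fun y => ((fderiv ℝ S y w : ℝ) : ℂ))
      (Complex.ofRealCLM.comp (fderiv ℝ (fun y => fderiv ℝ S y w) x₀)) x₀ :=
    Complex.ofRealCLM.hasFDerivAt.comp x₀ hfS
  have hAx : HasFDerivAt A (fderiv ℝ A x₀) x₀ := (hAd x₀).hasFDerivAt
  have h1 := hfA.add (((hAx.const_mul μ)).mul hfSc)
  have h2 : fderiv ℝ (fun y => Complex.exp (μ * S y) *
        (fderiv ℝ A y w + μ * A y * (fderiv ℝ S y w : ℂ))) x₀ = _ :=
    ((wkb_exp_hasFDerivAt μ hSd x₀).mul h1).fderiv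
  rw [h2]
  simp [ContinuousLinearMap.add_apply, ContinuousLinearMap.smul_apply,
    ContinuousLinearMap.comp_apply, Complex.ofRealCLM_apply, smul_eq_mul]
  ring

lemma wkb_neg_sum2_mul (f : Fin n → Fin n → ℂ) (a : ℂ) :
    -((∑ i, ∑ j, f i j) * a) = ∑ i, ∑ j, -(f i j * a) := by
  simp only [Finset.sum_neg_distrib, Finset.sum_mul]

end WKBaux

/-- WKB / infinite-frequency limit: inserting the wave ansatz
`u_λ(x) = exp (I S x / λ) * A x` into the second-order operator `E`, one has
`λ² · exp (−I S x₀ / λ) · (E u_λ)(x₀) → −(∑ᵢⱼ c i j x₀ ∂ᵢS(x₀) ∂ⱼS(x₀)) · A x₀` as `λ → 0⁺`. -/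
theorem wkb_principal_symbol_limit {n : ℕ}
    (c : Fin n → Fin n → (Fin n → ℝ) → ℝ)
    (b : Fin n → (Fin n → ℝ) → ℝ)
    (q : (Fin n → ℝ) → ℝ)
    (hc : ∀ i j, Continuous (c i j)) (hb : ∀ i, Continuous (b i)) (hq : Continuous q)
    (S : (Fin n → ℝ) → ℝ) (A : (Fin n → ℝ) → ℂ)
    (hS : ContDiff ℝ 2 S) (hA : ContDiff ℝ 2 A)
    (x₀ : Fin n → ℝ) :
    Tendsto
      (fun lam : ℝ =>
        (lam : ℂ) ^ 2 * Complex.exp (-Complex.I * (S x₀ : ℂ) / (lam : ℂ)) *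
          secondOrderOp c b q
            (fun x => Complex.exp (Complex.I * (S x : ℂ) / (lam : ℂ)) * A x) x₀)
      (nhdsWithin 0 (Set.Ioi 0))
      (nhds (-((∑ i, ∑ j,
          c i j x₀ * fderiv ℝ S x₀ (Pi.single i 1) * fderiv ℝ S x₀ (Pi.single j 1) : ℝ) : ℂ)
        * A x₀)) := by
  have hSd : Differentiable ℝ S := hS.differentiable two_ne_zero
  have hAd : Differentiable ℝ A := hA.differentiable two_ne_zero
  set F : ℝ → ℂ := fun t =>
    (∑ i, ∑ j, (c i j x₀ : ℂ) *
      (Complex.I * t * (fderiv ℝ A x₀ (Pi.single i 1) * (fderiv ℝ S x₀ (Pi.single j 1) : ℂ)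
          + A x₀ * (fderiv ℝ (fun y => fderiv ℝ S y (Pi.single j 1)) x₀ (Pi.single i 1) : ℂ)
          + (fderiv ℝ S x₀ (Pi.single i 1) : ℂ) * fderiv ℝ A x₀ (Pi.single j 1))
        - A x₀ * (fderiv ℝ S x₀ (Pi.single i 1) : ℂ) * (fderiv ℝ S x₀ (Pi.single j 1) : ℂ)
        + (t : ℂ) ^ 2 * fderiv ℝ (fun y => fderiv ℝ A y (Pi.single j 1)) x₀ (Pi.single i 1)))
    + (∑ i, (b i x₀ : ℂ) * ((t : ℂ) ^ 2 * fderiv ℝ A x₀ (Pi.single i 1)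
        + Complex.I * t * (A x₀ * (fderiv ℝ S x₀ (Pi.single i 1) : ℂ))))
    + (t : ℂ) ^ 2 * q x₀ * A x₀ with hFdef
  have key : ∀ lam : ℝ, lam ≠ 0 →
      (lam : ℂ) ^ 2 * Complex.exp (-Complex.I * (S x₀ : ℂ) / (lam : ℂ)) *
        secondOrderOp c b q
          (fun x => Complex.exp (Complex.I * (S x : ℂ) / (lam : ℂ)) * A x) x₀ = F lam := by
    intro lam hlam
    have hlamc : (lam : ℂ) ≠ 0 := by exact_mod_cast hlam
    set μ : ℂ := Complex.I / lam with hμdef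
    have hμ : ∀ s : ℝ, Complex.I * (s : ℂ) / (lam : ℂ) = μ * s := fun s =>
      mul_div_right_comm Complex.I (s : ℂ) (lam : ℂ)
    have hμ1 : (lam : ℂ) * μ = Complex.I := by rw [hμdef]; field_simp
    have hμ2 : (lam : ℂ) ^ 2 * μ ^ 2 = -1 := by
      rw [← mul_pow, hμ1, Complex.I_sq]
    have hneg : -Complex.I * (S x₀ : ℂ) / (lam : ℂ) = -(μ * S x₀) := by
      rw [neg_mul, neg_div, hμ]
    have hfun : (fun x => Complex.exp (Complex.I * (S x : ℂ) / (lam : ℂ)) * A x)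
        = fun x => Complex.exp (μ * S x) * A x := funext fun x => by rw [hμ]
    rw [hneg, Complex.exp_neg, hfun]
    have hE := Complex.exp_ne_zero (μ * S x₀)
    have hop : secondOrderOp c b q (fun x => Complex.exp (μ * S x) * A x) x₀ =
        Complex.exp (μ * S x₀) *
          ((∑ i, ∑ j, (c i j x₀ : ℂ) *
            (fderiv ℝ (fun y => fderiv ℝ A y (Pi.single j 1)) x₀ (Pi.single i 1)
              + μ * (fderiv ℝ A x₀ (Pi.single i 1) * (fderiv ℝ S x₀ (Pi.single j 1) : ℂ))
              + μ * (A x₀ * (fderiv ℝ (fun y => fderiv ℝ S y (Pi.single j 1)) x₀ (Pi.single i 1) : ℂ))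
              + μ * ((fderiv ℝ S x₀ (Pi.single i 1) : ℂ) * fderiv ℝ A x₀ (Pi.single j 1))
              + μ ^ 2 * (A x₀ * (fderiv ℝ S x₀ (Pi.single i 1) : ℂ) * (fderiv ℝ S x₀ (Pi.single j 1) : ℂ))))
          + (∑ i, (b i x₀ : ℂ) *
              (fderiv ℝ A x₀ (Pi.single i 1) + μ * A x₀ * (fderiv ℝ S x₀ (Pi.single i 1) : ℂ)))
          + (q x₀ : ℂ) * A x₀) := by
      simp only [secondOrderOp, wkb_deriv1 μ hSd hAd, wkb_deriv2 μ hS hA, Complex.real_smul]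
      rw [mul_add, mul_add, Finset.mul_sum]
      congr 1
      congr 1
      · exact Finset.sum_congr rfl fun i _ => by
          rw [Finset.mul_sum]
          exact Finset.sum_congr rfl fun j _ => by ring
      · rw [Finset.mul_sum]
        exact Finset.sum_congr rfl fun i _ => by ring
      · ring
    rw [hop, mul_assoc ((lam : ℂ) ^ 2), inv_mul_cancel_left₀ hE]
    rw [hFdef]
    rw [mul_add, mul_add, Finset.mul_sum, Finset.mul_sum]
    congr 1
    congr 1
    · refine Finset.sum_congr rfl fun i _ => ?_
      rw [Finset.mul_sum]
      refine Finset.sum_congr rfl fun j _ => ?_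
      linear_combination ((c i j x₀ : ℂ) *
          (fderiv ℝ A x₀ (Pi.single i 1) * (fderiv ℝ S x₀ (Pi.single j 1) : ℂ)
            + A x₀ * (fderiv ℝ (fun y => fderiv ℝ S y (Pi.single j 1)) x₀ (Pi.single i 1) : ℂ)
            + (fderiv ℝ S x₀ (Pi.single i 1) : ℂ) * fderiv ℝ A x₀ (Pi.single j 1)) * (lam : ℂ)) * hμ1
        + ((c i j x₀ : ℂ) * A x₀ * (fderiv ℝ S x₀ (Pi.single i 1) : ℂ)
            * (fderiv ℝ S x₀ (Pi.single j 1) : ℂ)) * hμ2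
    · refine Finset.sum_congr rfl fun i _ => ?_
      linear_combination ((b i x₀ : ℂ) * A x₀ * (fderiv ℝ S x₀ (Pi.single i 1) : ℂ) * (lam : ℂ)) * hμ1
    · ring
  have hFc : Continuous F := by fun_prop
  have hF0 : F 0 = -((∑ i, ∑ j,
      c i j x₀ * fderiv ℝ S x₀ (Pi.single i 1) * fderiv ℝ S x₀ (Pi.single j 1) : ℝ) : ℂ)
      * A x₀ := by
    simp only [hFdef, Complex.ofReal_zero, mul_zero, zero_mul, add_zero, zero_add, zero_sub,
      ne_eq, OfNat.ofNat_ne_zero, not_false_eq_true, zero_pow, Finset.sum_const_zero]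
    push_cast
    rw [neg_mul, wkb_neg_sum2_mul]
    exact Finset.sum_congr rfl fun i _ => Finset.sum_congr rfl fun j _ => by ring
  have hF : Tendsto F (nhdsWithin 0 (Set.Ioi 0)) (nhds (F 0)) :=
    (hFc.tendsto 0).mono_left nhdsWithin_le_nhds
  rw [hF0] at hF
  refine hF.congr' ?_
  filter_upwards [self_mem_nhdsWithin] with lam hlam
  exact (key lam (ne_of_gt hlam)).symm
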